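/- Let G and H be finite simple graphs such that |V(H)| ≤ |V(G)| and H is connected (in particular nonempty). Then there exists an injective map φ : V(H) → V(G) such that the superposition F = G ⊕_φ H is connected if and only if c(G) ≤ |V(H)|, where c(G) denotes the number of connected components of G. -/

import Mathlib

open SimpleGraph

/-- The superposition `G ⊕_φ H` of `G` and `H` with respect to an injective map
`φ : V(H) ↪ V(G)`. -/
def superpose {α β : Type*} (G : SimpleGraph α) (H : SimpleGraph β) (φ : β ↪ α) :
    SimpleGraph α :=
  G ⊔ SimpleGraph.map φ H

/-- Extend an injection along an embedding. -/
lemma embedding_extend {α β γ : Type*} [Fintype α] [Fintype β] [Fintype γ]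
    (e : γ ↪ β) (k : γ ↪ α) (h : Fintype.card β ≤ Fintype.card α) :
    ∃ φ : β ↪ α, ∀ c, φ (e c) = k c := by
  classical
  have hce : Fintype.card {x : β // x ∉ Set.range e} = Fintype.card β - Fintype.card γ := by
    rw [Fintype.card_subtype_compl]
    congr 1
    exact (Fintype.card_congr (Equiv.ofInjective e e.injective)).symm
  have hck : Fintype.card {x : α // x ∉ Set.range k} = Fintype.card α - Fintype.card γ := by
    rw [Fintype.card_subtype_compl]
    congr 1
    exact (Fintype.card_congr (Equiv.ofInjective k k.injective)).symm
  have hle : Fintype.card {x : β // x ∉ Set.range e} ≤ Fintype.card {x : α // x ∉ Set.range k} := by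
    rw [hce, hck]; exact Nat.sub_le_sub_right h _
  obtain ⟨g⟩ := Function.Embedding.nonempty_of_card_le hle
  have hgk : ∀ x, (g x : α) ∉ Set.range k := fun x => (g x).2
  refine ⟨⟨fun x => if hx : ∃ c, e c = x then k hx.choose else g ⟨x, fun ⟨c, hc⟩ => hx ⟨c, hc⟩⟩,
    ?_⟩, ?_⟩
  · intro x y hxy
    by_cases hx : ∃ c, e c = x <;> by_cases hy : ∃ c, e c = y <;>
      simp only [hx, hy, dif_pos, dif_neg, not_false_iff] at hxy
    · rw [← hx.choose_spec, ← hy.choose_spec, k.injective hxy]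
    · exact absurd ⟨_, hxy⟩ (hgk _)
    · exact absurd ⟨_, hxy.symm⟩ (hgk _)
    · exact congrArg Subtype.val (g.injective (Subtype.ext hxy))
  · intro c
    have hx : ∃ c', e c' = e c := ⟨c, rfl⟩
    show (dite (∃ c', e c' = e c) (fun hx => k hx.choose) _) = k c
    rw [dif_pos hx]
    exact congrArg k (e.injective hx.choose_spec)

/-- Let `G` and `H` be finite graphs with `|V(H)| ≤ |V(G)|` and `H` connected. Then
there is an injective `φ : V(H) ↪ V(G)` with `G ⊕_φ H` connected iff the number of
connected components of `G` is at most `|V(H)|`. -/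
theorem stmt5 {α β : Type*} [Fintype α] [Fintype β]
    (G : SimpleGraph α) (H : SimpleGraph β)
    (hcard : Fintype.card β ≤ Fintype.card α) (hH : H.Connected) :
    (∃ φ : β ↪ α, (superpose G H φ).Connected) ↔
      Nat.card G.ConnectedComponent ≤ Fintype.card β := by
  classical
  have hβ : Nonempty β := hH.nonempty
  have hβpos : 0 < Fintype.card β := Fintype.card_pos
  constructor
  · rintro ⟨φ, hconn⟩
    by_cases hall : ∀ C : G.ConnectedComponent, ∃ b, G.connectedComponentMk (φ b) = C
    · choose g hg using hall
      have hinj : Function.Injective g := by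
        intro C D hCD
        rw [← hg C, ← hg D, hCD]
      calc Nat.card G.ConnectedComponent ≤ Nat.card β := Nat.card_le_card_of_injective g hinj
        _ = Fintype.card β := Nat.card_eq_fintype_card
    · push_neg at hall
      obtain ⟨C, hC⟩ := hall
      -- the component `C` is closed under superpose-adjacency, so everything is in `C`
      have hkey : ∀ (x w : α), (superpose G H φ).Walk x w →
          G.connectedComponentMk x = C → G.connectedComponentMk w = C := by
        intro x w p
        induction p with
        | nil => exact id
        | cons hadj p ih =>
          intro hx
          rcases hadj with hadj | hadj
          · exact ih ((ConnectedComponent.sound hadj.reachable).symm.trans hx)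
          · obtain ⟨-, u, u', hu, rfl, rfl⟩ := hadj
            exact absurd hx (hC u)
      obtain ⟨v, hv⟩ := Quot.exists_rep C
      have hall' : ∀ D : G.ConnectedComponent, D = C := by
        refine ConnectedComponent.ind fun w => ?_
        obtain ⟨p⟩ := hconn.preconnected v w
        exact hkey v w p hv
      have : Subsingleton G.ConnectedComponent :=
        ⟨fun a b => (hall' a).trans (hall' b).symm⟩
      have h1 : Nat.card G.ConnectedComponent = 1 := Nat.card_of_subsingleton C
      rw [h1]; exact hβpos
  · intro h
    letI : Fintype G.ConnectedComponent := Fintype.ofFinite _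
    have hkinj : Function.Injective (fun C : G.ConnectedComponent => (Quot.exists_rep C).choose) := by
      intro C D hCD
      have hC := (Quot.exists_rep C).choose_spec
      have hD := (Quot.exists_rep D).choose_spec
      rw [← hC, ← hD]
      exact congrArg _ hCD
    set k : G.ConnectedComponent ↪ α := ⟨_, hkinj⟩ with hk
    have hcc : Fintype.card G.ConnectedComponent ≤ Fintype.card β := by
      rwa [← Nat.card_eq_fintype_card]
    obtain ⟨e⟩ := Function.Embedding.nonempty_of_card_le hcc
    obtain ⟨φ, hφ⟩ := embedding_extend e k hcard
    have hrep : ∀ C : G.ConnectedComponent, G.connectedComponentMk (φ (e C)) = C := by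
      intro C
      rw [hφ C]
      exact (Quot.exists_rep C).choose_spec
    refine ⟨φ, ?_⟩
    have hαne : Nonempty α := ⟨φ (Classical.arbitrary β)⟩
    rw [connected_iff]
    refine ⟨fun u v => ?_, hαne⟩
    have r1 : G.Reachable u (φ (e (G.connectedComponentMk u))) :=
      ConnectedComponent.exact ((hrep _).symm)
    have r3 : G.Reachable v (φ (e (G.connectedComponentMk v))) :=
      ConnectedComponent.exact ((hrep _).symm)
    have r2 : (SimpleGraph.map φ H).Reachable (φ (e (G.connectedComponentMk u)))
        (φ (e (G.connectedComponentMk v))) :=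
      Reachable.map
        (⟨φ, fun hadj => ⟨φ.injective.ne hadj.ne, _, _, hadj, rfl, rfl⟩⟩ : H →g SimpleGraph.map φ H)
        (hH.preconnected (e (G.connectedComponentMk u)) (e (G.connectedComponentMk v)))
    exact ((r1.mono le_sup_left).trans (r2.mono le_sup_right)).trans
      (r3.mono le_sup_left).symm
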